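/- For ε > 0, let β(ε) denote the unique β > e^{−1} with 1 − β − (1/(2e))·(log β)² = 1 − 3/(2e) − ε; set z(β) = e·β + log β and 𝒱(β) = β·exp(−z(β))·(exp(z(β)) − z(β) − 1). Then 𝒱(β(ε)) = 2ε + O(ε²) as ε → 0+. -/

import Mathlib

open Real Filter Set Topology Asymptotics

noncomputable def zOf (β : ℝ) : ℝ := Real.exp 1 * β + Real.log β

noncomputable def VFluid (β : ℝ) : ℝ :=
  β * Real.exp (-(zOf β)) * (Real.exp (zOf β) - zOf β - 1)

section AuxLemmas

open Finset in
lemma log_lower {δ : ℝ} (h0 : 0 ≤ δ) : δ / (1 + δ) ≤ Real.log (1 + δ) := by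
  have h1 : (0:ℝ) < 1 + δ := by linarith
  have h2 := Real.log_le_sub_one_of_pos (x := (1 + δ)⁻¹) (by positivity)
  rw [Real.log_inv] at h2
  have : (1 + δ)⁻¹ - 1 = -(δ / (1 + δ)) := by field_simp; ring
  rw [this] at h2
  linarith

lemma log_r_bound {δ : ℝ} (h0 : 0 ≤ δ) (h1 : δ ≤ 1/2) :
    |Real.log (1 + δ) - (δ - δ^2/2 + δ^3/3)| ≤ 2 * δ^4 := by
  have habs : |(-δ)| < 1 := by rw [abs_neg, abs_of_nonneg h0]; linarith
  have h := Real.abs_log_sub_add_sum_range_le habs 3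
  have hsum : (∑ i ∈ Finset.range 3, (-δ) ^ (i + 1) / (i + 1)) = -(δ - δ^2/2 + δ^3/3) := by
    norm_num [Finset.sum_range_succ]; ring
  rw [hsum, abs_neg, abs_of_nonneg h0] at h
  have h2 : (1:ℝ) - -δ = 1 + δ := by ring
  rw [h2] at h
  have h3 : -(δ - δ^2/2 + δ^3/3) + Real.log (1 + δ) = Real.log (1 + δ) - (δ - δ^2/2 + δ^3/3) := by ring
  rw [h3] at h
  have h4 : δ^(3+1) / (1 - δ) ≤ 2 * δ^4 := by
    rw [div_le_iff₀ (by linarith)]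
    have h5 : δ^(3+1) = δ^4 := by norm_num
    rw [h5]
    nlinarith [pow_nonneg h0 4]
  linarith

lemma exp_s_bound {δ : ℝ} (h0 : 0 ≤ δ) (h1 : δ ≤ 1/2) :
    |Real.exp (-δ) - (1 - δ + δ^2/2 - δ^3/6)| ≤ δ^4 := by
  have habs : |(-δ)| ≤ 1 := by rw [abs_neg, abs_of_nonneg h0]; linarith
  have h := Real.exp_bound habs (n := 4) (by norm_num)
  have hsum : (∑ m ∈ Finset.range 4, (-δ) ^ m / (m.factorial : ℝ)) = 1 - δ + δ^2/2 - δ^3/6 := by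
    norm_num [Finset.sum_range_succ, Nat.factorial]; ring
  rw [hsum, abs_neg, abs_of_nonneg h0] at h
  have : δ ^ 4 * ((4:ℕ).succ / ((4:ℕ).factorial * (4:ℕ)) : ℝ) ≤ δ^4 := by
    norm_num [Nat.factorial]
    nlinarith [pow_nonneg h0 4]
  linarith

lemma key_poly {δ r s : ℝ} (h0 : 0 < δ) (h1 : δ ≤ 1/2)
    (hr : |r| ≤ 2 * δ^4) (hs : |s| ≤ δ^4) :
    |1 - δ + 2 * ((δ - δ^2/2 + δ^3/3) + r) - ((δ - δ^2/2 + δ^3/3) + r)^2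
      - (1 + δ + ((δ - δ^2/2 + δ^3/3) + r)) * ((1 - δ + δ^2/2 - δ^3/6) + s)|
      ≤ 14 * δ^4 := by
  have hδ2 : δ^2 ≤ 1/4 := by nlinarith
  have hδ3 : δ^3 ≤ 1/8 := by nlinarith
  have hδ4' : δ^4 ≤ 1/16 := by nlinarith
  have hδ2' : (0:ℝ) ≤ δ^2 := by positivity
  have hδ3' : (0:ℝ) ≤ δ^3 := by positivity
  have hδ4 : (0:ℝ) < δ^4 := by positivity
  have hr' := abs_le.mp hr
  have hs' := abs_le.mp hs
  have hid : 1 - δ + 2 * ((δ - δ^2/2 + δ^3/3) + r) - ((δ - δ^2/2 + δ^3/3) + r)^2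
      - (1 + δ + ((δ - δ^2/2 + δ^3/3) + r)) * ((1 - δ + δ^2/2 - δ^3/6) + s)
      = (δ^5/12 - δ^6/18)
        + r * (2 - 2*(δ - δ^2/2 + δ^3/3) - r - (1 - δ + δ^2/2 - δ^3/6) - s)
        - (1 + δ + (δ - δ^2/2 + δ^3/3)) * s := by ring
  rw [hid]
  have b1 : |δ^5/12 - δ^6/18| ≤ δ^4/24 := by
    rw [abs_of_nonneg]
    · nlinarith [mul_le_mul_of_nonneg_left h1 hδ4.le]
    · have hfac : δ^5/12 - δ^6/18 = δ^5 * (1/12 - δ/18) := by ring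
      rw [hfac]
      exact mul_nonneg (pow_nonneg h0.le 5) (by linarith)
  have b2m : |2 - 2*(δ - δ^2/2 + δ^3/3) - r - (1 - δ + δ^2/2 - δ^3/6) - s| ≤ 5 := by
    rw [abs_le]
    constructor <;> linarith [hr'.1, hr'.2, hs'.1, hs'.2]
  have b2 : |r * (2 - 2*(δ - δ^2/2 + δ^3/3) - r - (1 - δ + δ^2/2 - δ^3/6) - s)|
      ≤ 10 * δ^4 := by
    rw [abs_mul]
    have := mul_le_mul hr b2m (abs_nonneg _) (by positivity : (0:ℝ) ≤ 2*δ^4)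
    linarith
  have b3 : |(1 + δ + (δ - δ^2/2 + δ^3/3)) * s| ≤ 3 * δ^4 := by
    rw [abs_mul]
    have hc : |1 + δ + (δ - δ^2/2 + δ^3/3)| ≤ 3 := by
      rw [abs_le]; constructor <;> linarith
    have := mul_le_mul hc hs (abs_nonneg _) (by norm_num : (0:ℝ) ≤ 3)
    linarith
  have habs := abs_sub ((δ^5/12 - δ^6/18)
        + r * (2 - 2*(δ - δ^2/2 + δ^3/3) - r - (1 - δ + δ^2/2 - δ^3/6) - s))
      ((1 + δ + (δ - δ^2/2 + δ^3/3)) * s)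
  have habs2 := abs_add_le (δ^5/12 - δ^6/18)
      (r * (2 - 2*(δ - δ^2/2 + δ^3/3) - r - (1 - δ + δ^2/2 - δ^3/6) - s))
  linarith

lemma key_bound {δ : ℝ} (h0 : 0 < δ) (h1 : δ ≤ 1/2) :
    |1 - δ + 2 * Real.log (1 + δ) - (Real.log (1 + δ))^2
      - (1 + δ + Real.log (1 + δ)) * Real.exp (-δ)| ≤ 14 * δ^4 := by
  have h := key_poly (r := Real.log (1 + δ) - (δ - δ^2/2 + δ^3/3))
      (s := Real.exp (-δ) - (1 - δ + δ^2/2 - δ^3/6)) h0 h1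
      (log_r_bound h0.le h1) (exp_s_bound h0.le h1)
  have e1 : (δ - δ^2/2 + δ^3/3) + (Real.log (1 + δ) - (δ - δ^2/2 + δ^3/3))
      = Real.log (1 + δ) := by ring
  have e2 : (1 - δ + δ^2/2 - δ^3/6) + (Real.exp (-δ) - (1 - δ + δ^2/2 - δ^3/6))
      = Real.exp (-δ) := by ring
  rw [e1, e2] at h
  exact h

end AuxLemmas

set_option maxHeartbeats 2000000 in
/-- For `ε > 0` let `B ε` be the unique `β > e⁻¹` with
`1 - β - (1/(2e)) (log β)² = 1 - 3/(2e) - ε`. With `z β = e β + log β` and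
`𝒱 β = β exp(-z β) (exp (z β) - z β - 1)`, one has `𝒱 (B ε) = 2 ε + O(ε²)` as `ε → 0⁺`. -/
theorem karpSipser_vertices_asymptotic_at_extinction (B : ℝ → ℝ)
    (hB : ∀ ε : ℝ, 0 < ε →
      (Real.exp 1)⁻¹ < B ε ∧
        1 - B ε - 1 / (2 * Real.exp 1) * (Real.log (B ε)) ^ 2
          = 1 - 3 / (2 * Real.exp 1) - ε) :
    (fun ε : ℝ => VFluid (B ε) - 2 * ε) =O[𝓝[>] (0 : ℝ)] (fun ε : ℝ => ε ^ 2) := by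
  have he : (0:ℝ) < Real.exp 1 := Real.exp_pos 1
  have heps3 : Real.exp 1 < 3 := by
    have := Real.exp_one_lt_d9; linarith
  rw [Asymptotics.isBigO_iff]
  refine ⟨1000, ?_⟩
  filter_upwards [Ioo_mem_nhdsGT
    (show (0:ℝ) < 1/(18*Real.exp 1) by positivity)] with ε hεI
  obtain ⟨hε0, hεu⟩ := hεI
  obtain ⟨hβ, heq⟩ := hB ε hε0
  set β := B ε with hβdef
  have hβpos : 0 < β := lt_trans (by positivity) hβ
  set δ := Real.exp 1 * β - 1 with hδdef
  have hδpos : 0 < δ := by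
    have h1 := mul_lt_mul_of_pos_left hβ he
    rw [mul_inv_cancel₀ he.ne'] at h1
    rw [hδdef]; linarith
  have hlogδ : Real.log (1 + δ) = 1 + Real.log β := by
    rw [hδdef, show (1:ℝ) + (Real.exp 1 * β - 1) = Real.exp 1 * β by ring,
      Real.log_mul he.ne' hβpos.ne', Real.log_exp]
  -- cleared equation
  have h2 : Real.exp 1 * β + (Real.log β)^2/2 = 3/2 + Real.exp 1 * ε := by
    field_simp at heq
    linarith
  have heq2 : δ - Real.log (1 + δ) + (Real.log (1 + δ))^2/2 = Real.exp 1 * ε := by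
    rw [hlogδ, hδdef]
    linear_combination h2
  -- basic log bounds
  have hLδ : Real.log (1 + δ) ≤ δ := by
    have := Real.log_le_sub_one_of_pos (show (0:ℝ) < 1 + δ by linarith)
    linarith
  have hLpos : 0 < Real.log (1 + δ) := by
    have := log_lower hδpos.le
    have h3 : 0 < δ / (1 + δ) := by positivity
    linarith
  -- δ ≤ 1/2
  have hδhalf : δ ≤ 1/2 := by
    by_contra hcon
    push_neg at hcon
    have hL13 : 1/3 ≤ Real.log (1 + δ) := by
      have h4 : (1:ℝ)/3 ≤ δ / (1 + δ) := by
        rw [le_div_iff₀ (by linarith)]; linarith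
      linarith [log_lower hδpos.le]
    have h5 : 1/18 ≤ Real.exp 1 * ε := by nlinarith [heq2]
    have h6 : Real.exp 1 * ε < 1/18 := by
      have := mul_lt_mul_of_pos_left hεu he
      rw [show Real.exp 1 * (1/(18*Real.exp 1)) = 1/18 by field_simp] at this
      exact this
    linarith
  -- δ² ≤ (9/2) e ε
  have hL23 : 2/3*δ ≤ Real.log (1 + δ) := by
    have h4 : 2/3*δ ≤ δ / (1 + δ) := by
      rw [le_div_iff₀ (by linarith)]; nlinarith
    linarith [log_lower hδpos.le]
  have hδ2 : δ^2 ≤ 9/2*(Real.exp 1*ε) := by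
    nlinarith [heq2, mul_nonneg (by linarith : (0:ℝ) ≤ Real.log (1+δ) - 2/3*δ)
      (by linarith : (0:ℝ) ≤ Real.log (1+δ) + 2/3*δ)]
  have hδ4ε : δ^4 ≤ 81/4*(Real.exp 1*ε)^2 := by
    nlinarith [mul_self_le_mul_self (sq_nonneg δ) hδ2]
  -- VFluid identity
  have hV : VFluid β = (1 + δ - (1 + δ + Real.log (1 + δ)) * Real.exp (-δ)) / Real.exp 1 := by
    have hEδ : Real.exp (-δ) = Real.exp 1 * (Real.exp (Real.exp 1 * β))⁻¹ := by
      rw [hδdef, show -(Real.exp 1 * β - 1) = 1 + -(Real.exp 1 * β) by ring,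
        Real.exp_add, Real.exp_neg]
    simp only [VFluid, zOf]
    rw [show -(Real.exp 1 * β + Real.log β) = -(Real.exp 1 * β) + -(Real.log β) by ring]
    rw [Real.exp_add, Real.exp_add, Real.exp_neg, Real.exp_neg, Real.exp_log hβpos]
    rw [hlogδ, hEδ, hδdef]
    have hne : Real.exp (Real.exp 1 * β) ≠ 0 := Real.exp_ne_zero _
    field_simp
    ring
  have h2ε : 2*ε = 2*(δ - Real.log (1+δ) + (Real.log (1+δ))^2/2)/Real.exp 1 := by
    rw [eq_div_iff he.ne']
    linear_combination (-2) * heq2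
  have hfinal : VFluid β - 2*ε
      = (1 - δ + 2*Real.log (1+δ) - (Real.log (1+δ))^2
          - (1+δ+Real.log (1+δ)) * Real.exp (-δ)) / Real.exp 1 := by
    rw [hV, h2ε]
    field_simp
    ring
  rw [hfinal]
  have hG := key_bound hδpos hδhalf
  rw [Real.norm_eq_abs, Real.norm_eq_abs, abs_div, abs_of_pos he,
    abs_of_nonneg (sq_nonneg ε)]
  rw [div_le_iff₀ he]
  calc |1 - δ + 2*Real.log (1+δ) - (Real.log (1+δ))^2
        - (1+δ+Real.log (1+δ)) * Real.exp (-δ)|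
      ≤ 14 * δ^4 := hG
    _ ≤ 14 * (81/4*(Real.exp 1*ε)^2) := by linarith
    _ ≤ 1000 * ε^2 * Real.exp 1 := by
        nlinarith [mul_nonneg (mul_nonneg
          (by linarith : (0:ℝ) ≤ 3 - Real.exp 1) he.le) (sq_nonneg ε), sq_nonneg ε, he]
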